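/- arXiv:1803.01075 — 3 statements merged into one kernel-verified Lean document; each statement's English description precedes it below -/
import Mathlib

section
/- Let Q be an inverse quantal frame and X a Q-locale. Then for every partial unit s ∈ Q_I, every x ∈ X, and every invariant element y ∈ I(X), one has (sx) ∧ y = s(x ∧ y). (Consequently, with the right action of I(X) on X given by binary meet, the left Q-action and the right I(X)-action on X associate: (sx)·y = s(x·y).) -/
/-- A unital involutive quantale: a complete lattice with an associative
multiplication preserving arbitrary joins in each variable, a unit `e`, and a
join-preserving involution. -/
structure Quantale' (Q : Type*) [CompleteLattice Q] where
  mul : Q → Q → Q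
  e : Q
  star : Q → Q
  mul_assoc : ∀ a b c, mul (mul a b) c = mul a (mul b c)
  sSup_mul : ∀ (S : Set Q) (b : Q), mul (sSup S) b = ⨆ a ∈ S, mul a b
  mul_sSup : ∀ (a : Q) (S : Set Q), mul a (sSup S) = ⨆ b ∈ S, mul a b
  e_mul : ∀ a, mul e a = a
  mul_e : ∀ a, mul a e = a
  star_star : ∀ a, star (star a) = a
  star_mul : ∀ a b, star (mul a b) = mul (star b) (star a)
  star_sSup : ∀ S : Set Q, star (sSup S) = ⨆ a ∈ S, star a

/-- The set of partial units of a quantale. -/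
def Quantale'.PU {Q : Type*} [CompleteLattice Q] (Qs : Quantale' Q) : Set Q :=
  {s | Qs.mul s (Qs.star s) ≤ Qs.e ∧ Qs.mul (Qs.star s) s ≤ Qs.e}

/-- An inverse quantal frame: a unital involutive quantale which is a frame,
has a stable support, and whose partial units join to the top. -/
structure InverseQuantalFrame (Q : Type*) [Order.Frame Q] extends toQuantale : Quantale' Q where
  supp : Q → Q
  supp_le_e : ∀ a, supp a ≤ e
  supp_sSup : ∀ S : Set Q, supp (sSup S) = ⨆ a ∈ S, supp a
  supp_le_mul_star : ∀ a, supp a ≤ mul a (star a)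
  le_supp_mul : ∀ a, a ≤ mul (supp a) a
  supp_stable : ∀ b a, b ≤ e → supp (mul b a) = mul b (supp a)
  sSup_PU : sSup {s | mul s (star s) ≤ e ∧ mul (star s) s ≤ e} = ⊤

/-- A left module over a quantale: a complete lattice with a unital associative
action preserving arbitrary joins in each variable. -/
structure QuantaleModule {Q : Type*} [CompleteLattice Q] (Qs : Quantale' Q)
    (X : Type*) [CompleteLattice X] where
  act : Q → X → X
  act_mul : ∀ a b x, act (Qs.mul a b) x = act a (act b x)
  act_e : ∀ x, act Qs.e x = x
  sSup_act : ∀ (S : Set Q) (x : X), act (sSup S) x = ⨆ a ∈ S, act a x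
  act_sSup : ∀ (a : Q) (S : Set X), act a (sSup S) = ⨆ x ∈ S, act a x

/-- A pre-Hilbert module over a quantale. -/
structure PreHilbertModule {Q : Type*} [CompleteLattice Q] (Qs : Quantale' Q)
    (X : Type*) [CompleteLattice X] extends QuantaleModule Qs X where
  inner : X → X → Q
  inner_act : ∀ a x y, inner (act a x) y = Qs.mul a (inner x y)
  sSup_inner : ∀ (S : Set X) (y : X), inner (sSup S) y = ⨆ x ∈ S, inner x y
  inner_star : ∀ x y, inner x y = Qs.star (inner y x)

namespace PreHilbertModule

variable {Q X : Type*} [CompleteLattice Q] [CompleteLattice X] {Qs : Quantale' Q}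

/-- A Hilbert section: `⟨x,s⟩s ≤ x` for all `x`. -/
def IsHilbertSection (H : PreHilbertModule Qs X) (s : X) : Prop :=
  ∀ x, H.act (H.inner x s) s ≤ x

/-- A regular element: `⟨s,s⟩s = s`. -/
def IsRegularSection (H : PreHilbertModule Qs X) (s : X) : Prop :=
  H.act (H.inner s s) s = s

/-- A Hilbert basis: `x = ⋁_{t ∈ S} ⟨x,t⟩t` for all `x`. -/
def IsHilbertBasis (H : PreHilbertModule Qs X) (S : Set X) : Prop :=
  ∀ x, x = ⨆ t ∈ S, H.act (H.inner x t) t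

/-- Non-degeneracy of the inner product. -/
def Nondegenerate (H : PreHilbertModule Qs X) : Prop :=
  ∀ x y, (∀ z, H.inner x z = H.inner y z) → x = y

end PreHilbertModule

/-- A `Q`-locale over an inverse quantal frame: a module which is a frame and
satisfies the anchor condition. -/
structure QLocale {Q : Type*} [Order.Frame Q] (Qf : InverseQuantalFrame Q)
    (X : Type*) [Order.Frame X] extends QuantaleModule Qf.toQuantale X where
  anchor : ∀ b x, b ≤ Qf.e → act b x = act b ⊤ ⊓ x

/-- A `Q`-sheaf over an inverse quantal frame: a pre-Hilbert module which is a
frame, satisfies the anchor condition, and has a Hilbert basis. -/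
structure QSheaf {Q : Type*} [Order.Frame Q] (Qf : InverseQuantalFrame Q)
    (X : Type*) [Order.Frame X] extends PreHilbertModule Qf.toQuantale X where
  anchor : ∀ b x, b ≤ Qf.e → act b x = act b ⊤ ⊓ x
  hasBasis : ∃ S : Set X, ∀ x, x = ⨆ t ∈ S, act (inner x t) t

namespace QSheaf

variable {Q X : Type*} [Order.Frame Q] [Order.Frame X] {Qf : InverseQuantalFrame Q}

/-- The support `ς_X(x) = ⟨x,x⟩ ∧ e` of a `Q`-sheaf. -/
def sppX (H : QSheaf Qf X) (x : X) : Q := H.inner x x ⊓ Qf.e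

/-- A local section: `ς_X(x)s = x` for all `x ≤ s`. -/
def IsLocalSection (H : QSheaf Qf X) (s : X) : Prop :=
  ∀ x ≤ s, H.act (H.sppX x) s = x

/-- A principal section: a local section with `⟨s,s⟩ ≤ e`. -/
def IsPrincipalSection (H : QSheaf Qf X) (s : X) : Prop :=
  H.IsLocalSection s ∧ H.inner s s ≤ Qf.e

/-- A right local section: `x = s ∧ 1_Q·x` for all `x ≤ s`. -/
def IsRightLocalSection (H : QSheaf Qf X) (s : X) : Prop :=
  ∀ x ≤ s, x = s ⊓ H.act ⊤ x

/-- A local bisection: simultaneously a local section and a right local section. -/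
def IsBisection (H : QSheaf Qf X) (s : X) : Prop :=
  H.IsLocalSection s ∧ H.IsRightLocalSection s

end QSheaf

section Aux

variable {Q X : Type*} [CompleteLattice Q] [CompleteLattice X] {Qs : Quantale' Q}

theorem QuantaleModule.act_mono_left (M : QuantaleModule Qs X) {a a' : Q} (h : a ≤ a')
    (x : X) : M.act a x ≤ M.act a' x := by
  have h1 : sSup {a, a'} = a' := by
    simp [sSup_pair, sup_eq_right.mpr h]
  have h2 := M.sSup_act {a, a'} x
  rw [h1] at h2
  rw [h2]
  exact le_iSup₂ (f := fun b (_ : b ∈ ({a, a'} : Set Q)) => M.act b x) a (by simp)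

theorem QuantaleModule.act_mono_right (M : QuantaleModule Qs X) (a : Q) {x x' : X}
    (h : x ≤ x') : M.act a x ≤ M.act a x' := by
  have h1 : sSup {x, x'} = x' := by
    simp [sSup_pair, sup_eq_right.mpr h]
  have h2 := M.act_sSup a {x, x'}
  rw [h1] at h2
  rw [h2]
  exact le_iSup₂ (f := fun b (_ : b ∈ ({x, x'} : Set X)) => M.act a b) x (by simp)

end Aux

/-- In a `Q`-locale over an inverse quantal frame, for every
partial unit `s ∈ Q_I`, every `x ∈ X` and every invariant `y` one has
`(sx) ∧ y = s(x ∧ y)`. -/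
theorem stmt4 {Q X : Type*} [Order.Frame Q] [Order.Frame X]
    (Qf : InverseQuantalFrame Q) (H : QLocale Qf X)
    (s : Q) (hs : s ∈ Qf.toQuantale.PU)
    (x y : X) (hy : H.act ⊤ y = y) :
    H.act s x ⊓ y = H.act s (x ⊓ y) := by
  set M := H.toQuantaleModule with hM
  obtain ⟨hss, hsts⟩ := hs
  apply le_antisymm
  · -- sx ⊓ y ≤ supp(s)(sx ⊓ y) = ss*(sx ⊓ y) route
    have hsupp_le : Qf.supp s ≤ Qf.e := Qf.supp_le_e s
    -- sx ≤ supp(s)⊤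
    have h1 : M.act s x ≤ M.act (Qf.supp s) ⊤ := by
      calc M.act s x ≤ M.act (Qf.mul (Qf.supp s) s) x :=
            M.act_mono_left (Qf.le_supp_mul s) x
        _ = M.act (Qf.supp s) (M.act s x) := M.act_mul _ _ _
        _ ≤ M.act (Qf.supp s) ⊤ := M.act_mono_right _ le_top
    have hfix : M.act s x ⊓ y = M.act (Qf.supp s) (M.act s x ⊓ y) := by
      rw [H.anchor _ _ hsupp_le]
      rw [inf_eq_right.mpr (le_trans inf_le_left h1)]
    have h2 : M.act s x ⊓ y ≤ M.act (Qf.mul s (Qf.star s)) (M.act s x ⊓ y) := by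
      exact hfix.le.trans (M.act_mono_left (Qf.supp_le_mul_star s) _)
    have h3 : M.act (Qf.star s) (M.act s x ⊓ y) ≤ x ⊓ y := by
      refine le_inf ?_ ?_
      · calc M.act (Qf.star s) (M.act s x ⊓ y)
            ≤ M.act (Qf.star s) (M.act s x) := M.act_mono_right _ inf_le_left
          _ = M.act (Qf.mul (Qf.star s) s) x := (M.act_mul _ _ _).symm
          _ ≤ M.act Qf.e x := M.act_mono_left hsts x
          _ = x := M.act_e x
      · calc M.act (Qf.star s) (M.act s x ⊓ y)
            ≤ M.act (Qf.star s) y := M.act_mono_right _ inf_le_right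
          _ ≤ M.act ⊤ y := M.act_mono_left le_top y
          _ = y := hy
    calc M.act s x ⊓ y ≤ M.act (Qf.mul s (Qf.star s)) (M.act s x ⊓ y) := h2
      _ = M.act s (M.act (Qf.star s) (M.act s x ⊓ y)) := M.act_mul _ _ _
      _ ≤ M.act s (x ⊓ y) := M.act_mono_right _ h3
  · refine le_inf (M.act_mono_right _ inf_le_left) ?_
    calc M.act s (x ⊓ y) ≤ M.act s y := M.act_mono_right _ inf_le_right
      _ ≤ M.act ⊤ y := M.act_mono_left le_top y
      _ = y := hy
end

section
/- Let Q be an inverse quantal frame, X a Q-sheaf, t a principal section of X, and u ∈ Q_I a partial unit with ς_X(t) = ς_Q(u*). Set s := ut. Then s is a principal section of X, ⟨s,t⟩ = u, and ς_X(s) = ς_Q(u). -/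
section AuxQuantale

variable {Q : Type*} [CompleteLattice Q] (Qs : Quantale' Q)

lemma Quantale'.mul_mono {a b c d : Q} (h1 : a ≤ b) (h2 : c ≤ d) :
    Qs.mul a c ≤ Qs.mul b d := by
  have hb : b = sSup {a, b} := by rw [sSup_pair, sup_eq_right.2 h1]
  have hd : d = sSup {c, d} := by rw [sSup_pair, sup_eq_right.2 h2]
  calc Qs.mul a c ≤ Qs.mul b c := by
        rw [hb, Qs.sSup_mul]
        exact le_biSup (fun z => Qs.mul z c) (Set.mem_insert a {b})
    _ ≤ Qs.mul b d := by
        rw [hd, Qs.mul_sSup]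
        exact le_biSup (fun z => Qs.mul b z) (Set.mem_insert c {d})

lemma Quantale'.star_mono {a b : Q} (h : a ≤ b) : Qs.star a ≤ Qs.star b := by
  have hb : b = sSup {a, b} := by rw [sSup_pair, sup_eq_right.2 h]
  rw [hb, Qs.star_sSup]
  exact le_biSup (fun z => Qs.star z) (Set.mem_insert a {b})

lemma Quantale'.star_e : Qs.star Qs.e = Qs.e := by
  have h1 : ∀ a, Qs.star a = Qs.mul (Qs.star a) (Qs.star Qs.e) := fun a => by
    rw [← Qs.star_mul, Qs.e_mul]
  have h2 := h1 (Qs.star Qs.e)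
  rw [Qs.star_star, Qs.e_mul] at h2
  exact h2.symm

end AuxQuantale

section AuxIQF

variable {Q : Type*} [Order.Frame Q] (Qf : InverseQuantalFrame Q)

lemma InverseQuantalFrame.supp_e : Qf.supp Qf.e = Qf.e :=
  le_antisymm (Qf.supp_le_e _) (by
    have := Qf.le_supp_mul Qf.e
    rwa [Qf.mul_e] at this)

lemma InverseQuantalFrame.supp_of_le_e {b : Q} (h : b ≤ Qf.e) : Qf.supp b = b := by
  have := Qf.supp_stable b Qf.e h
  rwa [Qf.mul_e, Qf.supp_e, Qf.mul_e] at this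

lemma InverseQuantalFrame.mul_self_star_of_le_e {b : Q} (h : b ≤ Qf.e) :
    Qf.mul b (Qf.star b) = b := by
  refine le_antisymm ?_ ?_
  · calc Qf.mul b (Qf.star b) ≤ Qf.mul b Qf.e :=
        Qf.toQuantale.mul_mono le_rfl ((Qf.toQuantale.star_mono h).trans_eq Qf.toQuantale.star_e)
    _ = b := Qf.mul_e b
  · calc b = Qf.supp b := (Qf.supp_of_le_e h).symm
    _ ≤ Qf.mul b (Qf.star b) := Qf.supp_le_mul_star b

lemma InverseQuantalFrame.star_of_le_e {b : Q} (h : b ≤ Qf.e) : Qf.star b = b := by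
  have key : ∀ c : Q, c ≤ Qf.e → c ≤ Qf.star c := by
    intro c hc
    calc c = Qf.mul c (Qf.star c) := (Qf.mul_self_star_of_le_e hc).symm
      _ ≤ Qf.mul Qf.e (Qf.star c) := Qf.toQuantale.mul_mono hc le_rfl
      _ = Qf.star c := Qf.e_mul _
  refine le_antisymm ?_ (key b h)
  have hsb : Qf.star b ≤ Qf.e := (Qf.toQuantale.star_mono h).trans_eq Qf.toQuantale.star_e
  have := key (Qf.star b) hsb
  rwa [Qf.star_star] at this

lemma InverseQuantalFrame.mul_self_of_le_e {b : Q} (h : b ≤ Qf.e) : Qf.mul b b = b := by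
  have := Qf.mul_self_star_of_le_e h
  rwa [Qf.star_of_le_e h] at this

lemma InverseQuantalFrame.mul_eq_inf_of_le_e {b c : Q} (hb : b ≤ Qf.e) (hc : c ≤ Qf.e) :
    Qf.mul b c = b ⊓ c := by
  refine le_antisymm (le_inf ?_ ?_) ?_
  · calc Qf.mul b c ≤ Qf.mul b Qf.e := Qf.toQuantale.mul_mono le_rfl hc
    _ = b := Qf.mul_e b
  · calc Qf.mul b c ≤ Qf.mul Qf.e c := Qf.toQuantale.mul_mono hb le_rfl
    _ = c := Qf.e_mul c
  · calc b ⊓ c = Qf.mul (b ⊓ c) (b ⊓ c) := (Qf.mul_self_of_le_e (inf_le_left.trans hb)).symm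
    _ ≤ Qf.mul b c := Qf.toQuantale.mul_mono inf_le_left inf_le_right

lemma InverseQuantalFrame.supp_eq_mul_star {a : Q} (h : Qf.mul a (Qf.star a) ≤ Qf.e) :
    Qf.supp a = Qf.mul a (Qf.star a) := by
  refine le_antisymm (Qf.supp_le_mul_star a) ?_
  calc Qf.mul a (Qf.star a) ≤ Qf.mul (Qf.mul (Qf.supp a) a) (Qf.star a) :=
      Qf.toQuantale.mul_mono (Qf.le_supp_mul a) le_rfl
    _ = Qf.mul (Qf.supp a) (Qf.mul a (Qf.star a)) := Qf.mul_assoc _ _ _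
    _ ≤ Qf.mul (Qf.supp a) Qf.e := Qf.toQuantale.mul_mono le_rfl h
    _ = Qf.supp a := Qf.mul_e _

end AuxIQF

section AuxMod

variable {Q X : Type*} [CompleteLattice Q] [CompleteLattice X] {Qs : Quantale' Q}

lemma QuantaleModule.act_mono (M : QuantaleModule Qs X) {a b : Q} {x y : X}
    (h1 : a ≤ b) (h2 : x ≤ y) : M.act a x ≤ M.act b y := by
  have hb : b = sSup {a, b} := by rw [sSup_pair, sup_eq_right.2 h1]
  have hy : y = sSup {x, y} := by rw [sSup_pair, sup_eq_right.2 h2]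
  calc M.act a x ≤ M.act b x := by
        rw [hb, M.sSup_act]
        exact le_biSup (fun z => M.act z x) (Set.mem_insert a {b})
    _ ≤ M.act b y := by
        rw [hy, M.act_sSup]
        exact le_biSup (fun z => M.act b z) (Set.mem_insert x {y})

lemma PreHilbertModule.inner_mono_left (H : PreHilbertModule Qs X) {x y : X} (z' : X)
    (h : x ≤ y) : H.inner x z' ≤ H.inner y z' := by
  have hy : y = sSup {x, y} := by rw [sSup_pair, sup_eq_right.2 h]
  rw [hy, H.sSup_inner]
  exact le_biSup (fun z => H.inner z z') (Set.mem_insert x {y})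

lemma PreHilbertModule.inner_mono (H : PreHilbertModule Qs X) {x y z w : X}
    (h1 : x ≤ y) (h2 : z ≤ w) : H.inner x z ≤ H.inner y w := by
  refine (H.inner_mono_left z h1).trans ?_
  rw [H.inner_star y z, H.inner_star y w]
  exact Qs.star_mono (H.inner_mono_left y h2)

end AuxMod

/-- If `t` is a principal section, `u ∈ Q_I` and
`ς_X(t) = ς_Q(u*)`, then `s := ut` is a principal section, `⟨s,t⟩ = u` and
`ς_X(s) = ς_Q(u)`. -/
theorem stmt11 {Q X : Type*} [Order.Frame Q] [Order.Frame X]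
    (Qf : InverseQuantalFrame Q) (H : QSheaf Qf X)
    (t : X) (u : Q)
    (ht : H.IsPrincipalSection t) (hu : u ∈ Qf.toQuantale.PU)
    (hst : H.sppX t = Qf.supp (Qf.star u)) :
    H.IsPrincipalSection (H.act u t) ∧
    H.inner (H.act u t) t = u ∧
    H.sppX (H.act u t) = Qf.supp u := by
  obtain ⟨htl, hte⟩ := ht
  obtain ⟨hPU1, hPU2⟩ := hu
  have hPU2' : Qf.mul (Qf.star u) (Qf.star (Qf.star u)) ≤ Qf.e := by
    rw [Qf.star_star]; exact hPU2
  have hsuppstar : Qf.supp (Qf.star u) = Qf.mul (Qf.star u) u := by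
    have h := Qf.supp_eq_mul_star (a := Qf.star u) hPU2'
    rwa [Qf.star_star] at h
  have hsupp : Qf.supp u = Qf.mul u (Qf.star u) := Qf.supp_eq_mul_star hPU1
  have htt : H.inner t t = Qf.mul (Qf.star u) u := by
    simp only [QSheaf.sppX] at hst
    rw [inf_eq_left.2 hte] at hst
    rw [hst, hsuppstar]
  have hkey : Qf.mul (Qf.mul u (Qf.star u)) u = u := by
    refine le_antisymm ?_ ?_
    · calc Qf.mul (Qf.mul u (Qf.star u)) u ≤ Qf.mul Qf.e u :=
          Qf.toQuantale.mul_mono hPU1 le_rfl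
        _ = u := Qf.e_mul u
    · calc u ≤ Qf.mul (Qf.supp u) u := Qf.le_supp_mul u
        _ = Qf.mul (Qf.mul u (Qf.star u)) u := by rw [hsupp]
  have hinner_st : H.inner (H.act u t) t = u := by
    rw [H.inner_act, htt, ← Qf.mul_assoc, hkey]
  have hinner_ss : H.inner (H.act u t) (H.act u t) = Qf.mul u (Qf.star u) := by
    rw [H.inner_act, H.inner_star t (H.act u t), hinner_st]
  have hsppS : H.sppX (H.act u t) = Qf.supp u := by
    simp only [QSheaf.sppX]
    rw [hinner_ss, inf_eq_left.2 hPU1, hsupp]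
  have hloc : H.IsLocalSection (H.act u t) := by
    intro x hx
    have hcle_ss : H.inner x x ≤ Qf.mul u (Qf.star u) := by
      rw [← hinner_ss]; exact H.toPreHilbertModule.inner_mono hx hx
    have hcle : H.inner x x ≤ Qf.e := hcle_ss.trans hPU1
    have hsppx : H.sppX x = H.inner x x := inf_eq_left.2 hcle
    have hxle_top : x ≤ H.act (Qf.mul u (Qf.star u)) ⊤ := by
      calc x ≤ H.act u t := hx
        _ ≤ H.act u ⊤ := H.toPreHilbertModule.toQuantaleModule.act_mono le_rfl le_top
        _ = H.act (Qf.mul (Qf.mul u (Qf.star u)) u) ⊤ := by rw [hkey]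
        _ = H.act (Qf.mul u (Qf.star u)) (H.act u ⊤) := H.act_mul _ _ _
        _ ≤ H.act (Qf.mul u (Qf.star u)) ⊤ :=
          H.toPreHilbertModule.toQuantaleModule.act_mono le_rfl le_top
    have hA : H.act (Qf.mul u (Qf.star u)) x = x := by
      rw [H.anchor _ _ hPU1]
      exact inf_eq_right.2 hxle_top
    have hB : H.act (Qf.star u) x ≤ t := by
      calc H.act (Qf.star u) x ≤ H.act (Qf.star u) (H.act u t) :=
            H.toPreHilbertModule.toQuantaleModule.act_mono le_rfl hx
        _ = H.act (Qf.mul (Qf.star u) u) t := (H.act_mul _ _ _).symm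
        _ ≤ H.act Qf.e t := H.toPreHilbertModule.toQuantaleModule.act_mono hPU2 le_rfl
        _ = t := H.act_e t
    have hCstar : Qf.star (H.inner x x) = H.inner x x := (H.inner_star x x).symm
    have hC : H.inner (H.act (Qf.star u) x) (H.act (Qf.star u) x)
        = Qf.mul (Qf.star u) (Qf.mul (H.inner x x) u) := by
      rw [H.inner_act, H.inner_star x (H.act (Qf.star u) x), H.inner_act, Qf.star_mul,
        Qf.star_star, hCstar]
    have hCle : Qf.mul (Qf.star u) (Qf.mul (H.inner x x) u) ≤ Qf.e := by
      calc Qf.mul (Qf.star u) (Qf.mul (H.inner x x) u)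
          ≤ Qf.mul (Qf.star u) (Qf.mul Qf.e u) :=
            Qf.toQuantale.mul_mono le_rfl (Qf.toQuantale.mul_mono hcle le_rfl)
        _ = Qf.mul (Qf.star u) u := by rw [Qf.e_mul]
        _ ≤ Qf.e := hPU2
    have hsppB : H.sppX (H.act (Qf.star u) x)
        = Qf.mul (Qf.star u) (Qf.mul (H.inner x x) u) := by
      simp only [QSheaf.sppX]
      rw [hC, inf_eq_left.2 hCle]
    have hD := htl _ hB
    rw [hsppB] at hD
    have hscal : Qf.mul u (Qf.mul (Qf.star u) (Qf.mul (H.inner x x) u))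
        = Qf.mul (H.inner x x) u := by
      rw [← Qf.mul_assoc, ← Qf.mul_assoc]
      have h1 : Qf.mul (Qf.mul u (Qf.star u)) (H.inner x x) = H.inner x x := by
        rw [Qf.mul_eq_inf_of_le_e hPU1 hcle]
        exact inf_eq_right.2 hcle_ss
      rw [h1]
    rw [hsppx]
    calc H.act (H.inner x x) (H.act u t)
        = H.act (Qf.mul (H.inner x x) u) t := (H.act_mul _ _ _).symm
      _ = H.act (Qf.mul u (Qf.mul (Qf.star u) (Qf.mul (H.inner x x) u))) t := by rw [hscal]
      _ = H.act u (H.act (Qf.mul (Qf.star u) (Qf.mul (H.inner x x) u)) t) := H.act_mul _ _ _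
      _ = H.act u (H.act (Qf.star u) x) := by rw [hD]
      _ = H.act (Qf.mul u (Qf.star u)) x := (H.act_mul _ _ _).symm
      _ = x := hA
  refine ⟨⟨hloc, ?_⟩, hinner_st, hsppS⟩
  rw [hinner_ss]; exact hPU1
end

section
/- Let Q be an inverse quantal frame and X a Q-bisheaf. Then the set 𝔅_X of local bisections of X is a Hilbert basis with respect to both sheaf structures: for all x ∈ X, x = ⋁_{s∈𝔅_X}⟨x,s⟩s and x = ⋁_{s∈𝔅_X} (s ∧ 1_Q·(s ∧ x)). -/
section Aux

variable {Q : Type*} [Order.Frame Q] (Qf : InverseQuantalFrame Q)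

theorem iqf_mul_mono {a b c d : Q} (h1 : a ≤ b) (h2 : c ≤ d) :
    Qf.mul a c ≤ Qf.mul b d := by
  have hL : Qf.mul a c ≤ Qf.mul b c := by
    have h := Qf.sSup_mul {a, b} c
    rw [sSup_pair, sup_eq_right.mpr h1] at h
    rw [h]
    exact le_biSup (fun x => Qf.mul x c) (Set.mem_insert _ _)
  have hR : Qf.mul b c ≤ Qf.mul b d := by
    have h := Qf.mul_sSup b {c, d}
    rw [sSup_pair, sup_eq_right.mpr h2] at h
    rw [h]
    exact le_biSup (fun x => Qf.mul b x) (Set.mem_insert _ _)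
  exact hL.trans hR

theorem iqf_star_mono {a b : Q} (h : a ≤ b) : Qf.star a ≤ Qf.star b := by
  have hs := Qf.star_sSup {a, b}
  rw [sSup_pair, sup_eq_right.mpr h] at hs
  rw [hs]
  exact le_biSup (fun x => Qf.star x) (Set.mem_insert _ _)

theorem iqf_e_star : Qf.star Qf.e = Qf.e := by
  have h1 : ∀ a : Q, Qf.star a = Qf.mul (Qf.star a) (Qf.star Qf.e) := by
    intro a
    conv_lhs => rw [← Qf.e_mul a]
    rw [Qf.star_mul]
  have h2 := h1 (Qf.star Qf.e)
  rw [Qf.star_star, Qf.e_mul] at h2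
  exact h2.symm

theorem iqf_supp_mono {a b : Q} (h : a ≤ b) : Qf.supp a ≤ Qf.supp b := by
  have hs := Qf.supp_sSup {a, b}
  rw [sSup_pair, sup_eq_right.mpr h] at hs
  rw [hs]
  exact le_biSup (fun x => Qf.supp x) (Set.mem_insert _ _)

theorem iqf_le_supp_self {b : Q} (hb : b ≤ Qf.e) : b ≤ Qf.supp b := by
  refine (Qf.le_supp_mul b).trans ?_
  calc Qf.mul (Qf.supp b) b ≤ Qf.mul (Qf.supp b) Qf.e := iqf_mul_mono Qf le_rfl hb
    _ = Qf.supp b := Qf.mul_e _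

theorem iqf_star_le_e {b : Q} (hb : b ≤ Qf.e) : Qf.star b ≤ Qf.e := by
  have := iqf_star_mono Qf hb
  rwa [iqf_e_star] at this

theorem iqf_star_eq_self {b : Q} (hb : b ≤ Qf.e) : Qf.star b = b := by
  have h1 : b ≤ Qf.star b := by
    refine ((iqf_le_supp_self Qf hb).trans (Qf.supp_le_mul_star b)).trans ?_
    calc Qf.mul b (Qf.star b) ≤ Qf.mul Qf.e (Qf.star b) := iqf_mul_mono Qf hb le_rfl
      _ = Qf.star b := Qf.e_mul _
  have h2 : Qf.star b ≤ b := by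
    have hbe := iqf_star_le_e Qf hb
    refine ((iqf_le_supp_self Qf hbe).trans (Qf.supp_le_mul_star _)).trans ?_
    rw [Qf.star_star]
    calc Qf.mul (Qf.star b) b ≤ Qf.mul Qf.e b := iqf_mul_mono Qf hbe le_rfl
      _ = b := Qf.e_mul _
  exact le_antisymm h2 h1

theorem iqf_mul_self_eq {b : Q} (hb : b ≤ Qf.e) : Qf.mul b b = b := by
  have h1 : Qf.mul b b ≤ b := by
    calc Qf.mul b b ≤ Qf.mul Qf.e b := iqf_mul_mono Qf hb le_rfl
      _ = b := Qf.e_mul _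
  have h2 : b ≤ Qf.mul b b := by
    refine (Qf.le_supp_mul b).trans ?_
    calc Qf.mul (Qf.supp b) b ≤ Qf.mul (Qf.mul b (Qf.star b)) b :=
          iqf_mul_mono Qf (Qf.supp_le_mul_star b) le_rfl
      _ = Qf.mul (Qf.mul b b) b := by rw [iqf_star_eq_self Qf hb]
      _ ≤ Qf.mul (Qf.mul b b) Qf.e := iqf_mul_mono Qf le_rfl hb
      _ = Qf.mul b b := Qf.mul_e _
  exact le_antisymm h1 h2

theorem iqf_mul_inf_e_le {b : Q} (hb : b ≤ Qf.e) (a : Q) :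
    Qf.mul b a ⊓ Qf.e ≤ b := by
  have h1 : Qf.mul b a ⊓ Qf.e ≤ Qf.supp (Qf.mul b a ⊓ Qf.e) :=
    iqf_le_supp_self Qf inf_le_right
  refine h1.trans ((iqf_supp_mono Qf inf_le_left).trans ?_)
  rw [Qf.supp_stable b a hb]
  calc Qf.mul b (Qf.supp a) ≤ Qf.mul b Qf.e := iqf_mul_mono Qf le_rfl (Qf.supp_le_e a)
    _ = b := Qf.mul_e _

theorem iqf_pu_dc {u v : Q} (hu : u ∈ Qf.toQuantale.PU) (h : v ≤ u) :
    v ∈ Qf.toQuantale.PU :=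
  ⟨(iqf_mul_mono Qf h (iqf_star_mono Qf h)).trans hu.1,
   (iqf_mul_mono Qf (iqf_star_mono Qf h) h).trans hu.2⟩

theorem iqf_pu_star {u : Q} (hu : u ∈ Qf.toQuantale.PU) :
    Qf.star u ∈ Qf.toQuantale.PU := by
  constructor
  · rw [Qf.star_star]; exact hu.2
  · rw [Qf.star_star]; exact hu.1

theorem iqf_le_mul_mul_star (u : Q) : u ≤ Qf.mul (Qf.mul u (Qf.star u)) u :=
  (Qf.le_supp_mul u).trans (iqf_mul_mono Qf (Qf.supp_le_mul_star u) le_rfl)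

end Aux

section Aux2

variable {Q X : Type*} [Order.Frame Q] [Order.Frame X] {Qf : InverseQuantalFrame Q}
  (H : QSheaf Qf X)

theorem qs_act_mono {a b : Q} {x y : X} (h1 : a ≤ b) (h2 : x ≤ y) :
    H.act a x ≤ H.act b y := by
  have hL : H.act a x ≤ H.act b x := by
    have h := H.sSup_act {a, b} x
    rw [sSup_pair, sup_eq_right.mpr h1] at h
    rw [h]
    exact le_biSup (fun c => H.act c x) (Set.mem_insert _ _)
  have hR : H.act b x ≤ H.act b y := by
    have h := H.act_sSup b {x, y}
    rw [sSup_pair, sup_eq_right.mpr h2] at h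
    rw [h]
    exact le_biSup (fun z => H.act b z) (Set.mem_insert _ _)
  exact hL.trans hR

theorem qs_inner_mono_left {x y : X} (z : X) (h : x ≤ y) :
    H.inner x z ≤ H.inner y z := by
  have hs := H.sSup_inner {x, y} z
  rw [sSup_pair, sup_eq_right.mpr h] at hs
  rw [hs]
  exact le_biSup (fun w => H.inner w z) (Set.mem_insert _ _)

theorem qs_inner_mono {x x' y y' : X} (h1 : x ≤ x') (h2 : y ≤ y') :
    H.inner x y ≤ H.inner x' y' := by
  refine (qs_inner_mono_left H y h1).trans ?_
  rw [H.inner_star x' y, H.inner_star x' y']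
  exact iqf_star_mono Qf (qs_inner_mono_left H x' h2)

theorem qs_inner_act_right (a : Q) (x y : X) :
    H.inner x (H.act a y) = Qf.mul (H.inner x y) (Qf.star a) := by
  rw [H.inner_star, H.inner_act, Qf.star_mul, ← H.inner_star]

theorem qs_act_le_of_le_e {b : Q} (hb : b ≤ Qf.e) (x : X) : H.act b x ≤ x := by
  have := qs_act_mono H hb (le_refl x)
  rwa [H.act_e] at this

theorem qs_le_act_top (x : X) : x ≤ H.act ⊤ x := by
  have := qs_act_mono H (le_top (a := Qf.e)) (le_refl x)
  rwa [H.act_e] at this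

theorem qs_act_iSup_set (a : Q) (S : Set X) (f : X → X) :
    H.act a (⨆ x ∈ S, f x) = ⨆ x ∈ S, H.act a (f x) := by
  rw [← sSup_image, H.act_sSup, iSup_image]

theorem qs_act_sSup_fun (S : Set Q) (g : Q → Q) (x : X) :
    H.act (⨆ a ∈ S, g a) x = ⨆ a ∈ S, H.act (g a) x := by
  rw [← sSup_image, H.sSup_act, iSup_image]

theorem qs_act_iSup_setQ (S : Set X) (g : X → Q) (x : X) :
    H.act (⨆ a ∈ S, g a) x = ⨆ a ∈ S, H.act (g a) x := by
  rw [← sSup_image, H.sSup_act, iSup_image]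

theorem qs_inner_iSup_set (S : Set X) (f : X → X) (y : X) :
    H.inner (⨆ x ∈ S, f x) y = ⨆ x ∈ S, H.inner (f x) y := by
  rw [← sSup_image, H.sSup_inner, iSup_image]

/-- The set of Hilbert sections of a `Q`-sheaf. -/
def QSheaf.HS : Set X := {t | ∀ x, H.act (H.inner x t) t ≤ x}

theorem qs_basisHS (x : X) :
    x = ⨆ t ∈ H.HS, H.act (H.inner x t) t := by
  obtain ⟨S, hS⟩ := H.hasBasis
  have hsub : S ⊆ H.HS := by
    intro t ht x
    conv_rhs => rw [hS x]
    exact le_biSup (fun t => H.act (H.inner x t) t) ht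
  apply le_antisymm
  · conv_lhs => rw [hS x]
    exact iSup₂_le fun t ht => le_biSup (fun t => H.act (H.inner x t) t) (hsub ht)
  · exact iSup₂_le fun t ht => ht x

theorem qs_act_sppX_self (x : X) : H.act (H.sppX x) x = x := by
  refine le_antisymm (qs_act_le_of_le_e H inf_le_right x) ?_
  conv_lhs => rw [qs_basisHS H x]
  refine iSup₂_le fun t ht => ?_
  have key : Qf.supp (H.inner x t) ≤ H.sppX x := by
    refine le_inf ?_ (Qf.supp_le_e _)
    calc Qf.supp (H.inner x t) ≤ Qf.mul (H.inner x t) (Qf.star (H.inner x t)) :=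
          Qf.supp_le_mul_star _
      _ = Qf.mul (H.inner x t) (H.inner t x) := by rw [← H.inner_star t x]
      _ = H.inner (H.act (H.inner x t) t) x := (H.inner_act _ _ _).symm
      _ ≤ H.inner x x := qs_inner_mono_left H x (ht x)
  calc H.act (H.inner x t) t
      ≤ H.act (Qf.mul (H.sppX x) (H.inner x t)) t :=
        qs_act_mono H ((Qf.le_supp_mul _).trans (iqf_mul_mono Qf key le_rfl)) le_rfl
    _ = H.act (H.sppX x) (H.act (H.inner x t) t) := H.act_mul _ _ _
    _ ≤ H.act (H.sppX x) x := qs_act_mono H le_rfl (ht x)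

theorem qs_hs_dc {t t' : X} (ht : t ∈ H.HS) (h : t' ≤ t) : t' ∈ H.HS := by
  intro x
  exact (qs_act_mono H (qs_inner_mono H le_rfl h) h).trans (ht x)

theorem qs_hs_local {t : X} (ht : t ∈ H.HS) : H.IsLocalSection t := by
  intro x hx
  refine le_antisymm ?_ ?_
  · refine (qs_act_mono H (le_trans ?_ (qs_inner_mono H le_rfl hx)) le_rfl).trans (ht x)
    exact inf_le_left
  · calc x = H.act (H.sppX x) x := (qs_act_sppX_self H x).symm
      _ ≤ H.act (H.sppX x) t := qs_act_mono H le_rfl hx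

theorem qs_hs_act_pu {u : Q} {t : X} (hu : u ∈ Qf.toQuantale.PU) (ht : t ∈ H.HS) :
    H.act u t ∈ H.HS := by
  intro x
  rw [qs_inner_act_right]
  calc H.act (Qf.mul (H.inner x t) (Qf.star u)) (H.act u t)
      = H.act (Qf.mul (Qf.mul (H.inner x t) (Qf.star u)) u) t := (H.act_mul _ _ _).symm
    _ = H.act (Qf.mul (H.inner x t) (Qf.mul (Qf.star u) u)) t := by rw [Qf.mul_assoc]
    _ ≤ H.act (H.inner x t) t := by
        refine qs_act_mono H ?_ le_rfl
        calc Qf.mul (H.inner x t) (Qf.mul (Qf.star u) u)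
            ≤ Qf.mul (H.inner x t) Qf.e := iqf_mul_mono Qf le_rfl hu.2
          _ = H.inner x t := Qf.mul_e _
    _ ≤ x := ht x

theorem qs_act_pu_decomp (a : Q) (x C : X)
    (h : ∀ u ∈ Qf.toQuantale.PU, u ≤ a → H.act u x ≤ C) : H.act a x ≤ C := by
  have hPU : sSup Qf.toQuantale.PU = ⊤ := Qf.sSup_PU
  have ha : a = ⨆ u ∈ Qf.toQuantale.PU, a ⊓ u := by
    conv_lhs => rw [← inf_top_eq a, ← hPU]
    exact inf_sSup_eq
  rw [ha, qs_act_sSup_fun H Qf.toQuantale.PU (fun u => a ⊓ u) x]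
  exact iSup₂_le fun u hu => h _ (iqf_pu_dc Qf hu inf_le_right) inf_le_left

theorem qs_top_le_HS : (⊤ : X) ≤ ⨆ t ∈ H.HS, t := by
  conv_lhs => rw [qs_basisHS H ⊤]
  refine iSup₂_le fun t ht => ?_
  refine qs_act_pu_decomp H _ _ _ fun u hu _ => ?_
  exact le_biSup (fun t => t) (qs_hs_act_pu H hu ht)

theorem qs_rs_dc {s p : X} (hs : H.IsRightLocalSection s) (hps : p ≤ s) :
    H.IsRightLocalSection p := by
  intro x hxp
  have h1 := hs x (hxp.trans hps)
  refine le_antisymm (le_inf hxp (qs_le_act_top H x)) ?_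
  calc p ⊓ H.act ⊤ x ≤ s ⊓ H.act ⊤ x := inf_le_inf_right _ hps
    _ = x := h1.symm

end Aux2

section Aux3

variable {Q X : Type*} [Order.Frame Q] [Order.Frame X] {Qf : InverseQuantalFrame Q}
  (H : QSheaf Qf X)

theorem qs_local_mem_HS {s : X} (hs : H.IsLocalSection s) : s ∈ H.HS := by
  have key : ∀ t ∈ H.HS, H.act (H.inner t s) s ≤ t := by
    intro t ht
    refine qs_act_pu_decomp H _ _ _ fun u hu hule => ?_
    have hu1 : Qf.mul u (Qf.star u) ≤ Qf.e := hu.1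
    have hu2 : Qf.mul (Qf.star u) u ≤ Qf.e := hu.2
    have hsppt_e : H.sppX t ≤ Qf.e := inf_le_right
    -- supp u ≤ sppX t
    have hts : H.inner t s = Qf.mul (H.sppX t) (H.inner t s) := by
      conv_lhs => rw [← qs_act_sppX_self H t]
      rw [H.inner_act]
    have h1 : u ≤ Qf.mul (H.sppX t) ⊤ := by
      refine hule.trans ?_
      rw [hts]
      exact iqf_mul_mono Qf le_rfl le_top
    have h2 : Qf.mul u (Qf.star u) ≤ Qf.mul (H.sppX t) ⊤ := by
      calc Qf.mul u (Qf.star u)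
          ≤ Qf.mul (Qf.mul (H.sppX t) ⊤) (Qf.star u) := iqf_mul_mono Qf h1 le_rfl
        _ = Qf.mul (H.sppX t) (Qf.mul ⊤ (Qf.star u)) := Qf.mul_assoc _ _ _
        _ ≤ Qf.mul (H.sppX t) ⊤ := iqf_mul_mono Qf le_rfl le_top
    have husupp : Qf.supp u ≤ H.sppX t := by
      refine le_trans (le_inf (Qf.supp_le_mul_star u) (Qf.supp_le_e u)) ?_
      exact le_trans (inf_le_inf_right _ h2) (iqf_mul_inf_e_le Qf hsppt_e ⊤)
    have hu_le : u ≤ Qf.mul (H.inner t t) u :=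
      (Qf.le_supp_mul u).trans (iqf_mul_mono Qf (husupp.trans inf_le_left) le_rfl)
    -- b and m
    have hb_e : Qf.mul (Qf.star u) u ≤ Qf.e := hu2
    have hb_star : Qf.star (Qf.mul (Qf.star u) u) = Qf.mul (Qf.star u) u :=
      iqf_star_eq_self Qf hb_e
    have hb_idem :
        Qf.mul (Qf.mul (Qf.star u) u) (Qf.mul (Qf.star u) u) = Qf.mul (Qf.star u) u :=
      iqf_mul_self_eq Qf hb_e
    have hm : H.act (Qf.star u) t ∈ H.HS := qs_hs_act_pu H (iqf_pu_star Qf hu) ht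
    have hmm : H.inner (H.act (Qf.star u) t) (H.act (Qf.star u) t)
        = Qf.mul (Qf.star u) (Qf.mul (H.inner t t) u) := by
      rw [H.inner_act, qs_inner_act_right, Qf.star_star]
    have hb_mm : Qf.mul (Qf.star u) u
        ≤ H.inner (H.act (Qf.star u) t) (H.act (Qf.star u) t) := by
      rw [hmm]
      exact iqf_mul_mono Qf le_rfl hu_le
    have hsm : Qf.mul (Qf.star u) u ≤ H.inner s (H.act (Qf.star u) t) := by
      have heq : H.inner s (H.act (Qf.star u) t) = Qf.mul (H.inner s t) u := by
        rw [qs_inner_act_right, Qf.star_star]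
      rw [heq]
      have hstar : Qf.star u ≤ H.inner s t := by
        have := iqf_star_mono Qf hule
        rwa [← H.inner_star] at this
      exact iqf_mul_mono Qf hstar le_rfl
    -- z and z'
    have hzs : H.act (Qf.mul (Qf.star u) u) s ≤ s := qs_act_le_of_le_e H hb_e s
    have hbzm : Qf.mul (Qf.star u) u
        ≤ H.inner (H.act (Qf.mul (Qf.star u) u) s) (H.act (Qf.star u) t) := by
      rw [H.inner_act]
      calc Qf.mul (Qf.star u) u
          = Qf.mul (Qf.mul (Qf.star u) u) (Qf.mul (Qf.star u) u) := hb_idem.symm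
        _ ≤ Qf.mul (Qf.mul (Qf.star u) u) (H.inner s (H.act (Qf.star u) t)) :=
            iqf_mul_mono Qf le_rfl hsm
    have hz'z : H.act (Qf.mul (Qf.star u) u) (H.act (Qf.star u) t)
        ≤ H.act (Qf.mul (Qf.star u) u) s := by
      refine le_trans (qs_act_mono H hbzm le_rfl) ?_
      exact hm (H.act (Qf.mul (Qf.star u) u) s)
    have hz's : H.act (Qf.mul (Qf.star u) u) (H.act (Qf.star u) t) ≤ s := hz'z.trans hzs
    have hsppz_b : H.sppX (H.act (Qf.mul (Qf.star u) u) s) ≤ Qf.mul (Qf.star u) u := by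
      have hzz : H.inner (H.act (Qf.mul (Qf.star u) u) s) (H.act (Qf.mul (Qf.star u) u) s)
          ≤ Qf.mul (Qf.mul (Qf.star u) u) ⊤ := by
        rw [H.inner_act]
        exact iqf_mul_mono Qf le_rfl le_top
      refine le_trans (inf_le_inf_right _ hzz) (iqf_mul_inf_e_le Qf hb_e ⊤)
    have hb_z' : Qf.mul (Qf.star u) u
        ≤ H.inner (H.act (Qf.mul (Qf.star u) u) (H.act (Qf.star u) t))
            (H.act (Qf.mul (Qf.star u) u) (H.act (Qf.star u) t)) := by
      rw [H.inner_act, qs_inner_act_right, hb_star]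
      calc Qf.mul (Qf.star u) u
          = Qf.mul (Qf.mul (Qf.star u) u)
              (Qf.mul (Qf.mul (Qf.star u) u) (Qf.mul (Qf.star u) u)) := by
            rw [hb_idem, hb_idem]
        _ ≤ Qf.mul (Qf.mul (Qf.star u) u)
              (Qf.mul (H.inner (H.act (Qf.star u) t) (H.act (Qf.star u) t))
                (Qf.mul (Qf.star u) u)) :=
            iqf_mul_mono Qf le_rfl (iqf_mul_mono Qf hb_mm le_rfl)
    have hspp_le : H.sppX (H.act (Qf.mul (Qf.star u) u) s)
        ≤ H.sppX (H.act (Qf.mul (Qf.star u) u) (H.act (Qf.star u) t)) :=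
      le_inf (hsppz_b.trans hb_z') inf_le_right
    have hz_le : H.act (Qf.mul (Qf.star u) u) s
        ≤ H.act (Qf.mul (Qf.star u) u) (H.act (Qf.star u) t) := by
      conv_lhs => rw [← hs _ hzs]
      conv_rhs => rw [← hs _ hz's]
      exact qs_act_mono H hspp_le le_rfl
    have hzm : H.act (Qf.mul (Qf.star u) u) s ≤ H.act (Qf.star u) t :=
      hz_le.trans (qs_act_le_of_le_e H hb_e _)
    -- final computation
    have hub : Qf.mul u (Qf.mul (Qf.star u) u) = u := by
      refine le_antisymm ?_ ?_
      · calc Qf.mul u (Qf.mul (Qf.star u) u) ≤ Qf.mul u Qf.e := iqf_mul_mono Qf le_rfl hu2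
          _ = u := Qf.mul_e _
      · refine (iqf_le_mul_mul_star Qf u).trans ?_
        rw [Qf.mul_assoc]
    calc H.act u s = H.act (Qf.mul u (Qf.mul (Qf.star u) u)) s := by rw [hub]
      _ = H.act u (H.act (Qf.mul (Qf.star u) u) s) := H.act_mul _ _ _
      _ ≤ H.act u (H.act (Qf.star u) t) := qs_act_mono H le_rfl hzm
      _ = H.act (Qf.mul u (Qf.star u)) t := (H.act_mul _ _ _).symm
      _ ≤ H.act Qf.e t := qs_act_mono H hu1 le_rfl
      _ = t := H.act_e t
  -- conclude
  intro x
  have h1 : H.inner x s = ⨆ t ∈ H.HS, Qf.mul (H.inner x t) (H.inner t s) := by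
    conv_lhs => rw [qs_basisHS H x]
    rw [qs_inner_iSup_set]
    exact iSup_congr fun t => iSup_congr fun ht => H.inner_act _ _ _
  rw [h1, qs_act_iSup_setQ H H.HS (fun t => Qf.mul (H.inner x t) (H.inner t s)) s]
  refine iSup₂_le fun t ht => ?_
  calc H.act (Qf.mul (H.inner x t) (H.inner t s)) s
      = H.act (H.inner x t) (H.act (H.inner t s) s) := H.act_mul _ _ _
    _ ≤ H.act (H.inner x t) t := qs_act_mono H le_rfl (key t ht)
    _ ≤ x := ht x

theorem qs_cover (hbi : sSup {s : X | H.IsRightLocalSection s} = ⊤) (x C : X)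
    (h : ∀ p, H.IsBisection p → p ≤ x → p ≤ C) : x ≤ C := by
  have h1 : x ≤ ⨆ t ∈ H.HS, x ⊓ t := by
    conv_lhs => rw [← inf_top_eq x]
    refine le_trans (inf_le_inf_left x (qs_top_le_HS H)) ?_
    rw [inf_iSup_eq]
    refine iSup_mono fun t => ?_
    rw [inf_iSup_eq]
  refine h1.trans (iSup₂_le fun t ht => ?_)
  have h2 : x ⊓ t ≤ ⨆ r ∈ {s : X | H.IsRightLocalSection s}, x ⊓ t ⊓ r := by
    conv_lhs => rw [← inf_top_eq (x ⊓ t), ← hbi]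
    exact le_of_eq inf_sSup_eq
  refine h2.trans (iSup₂_le fun r hr => ?_)
  refine h (x ⊓ t ⊓ r) ⟨?_, ?_⟩ (inf_le_left.trans inf_le_left)
  · exact qs_hs_local H (qs_hs_dc H ht (inf_le_left.trans inf_le_right))
  · exact qs_rs_dc H hr inf_le_right

end Aux3

/-- In a `Q`-bisheaf, the set of local bisections is a Hilbert
basis with respect to both sheaf structures. -/
theorem stmt16 {Q X : Type*} [Order.Frame Q] [Order.Frame X]
    (Qf : InverseQuantalFrame Q) (H : QSheaf Qf X)
    (hbisheaf : sSup {s : X | H.IsRightLocalSection s} = ⊤) :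
    (∀ x : X, x = ⨆ s ∈ {t : X | H.IsBisection t}, H.act (H.inner x s) s) ∧
    (∀ x : X, x = ⨆ s ∈ {t : X | H.IsBisection t}, s ⊓ H.act ⊤ (s ⊓ x)) := by
  constructor
  · intro x
    refine le_antisymm ?_ ?_
    · refine qs_cover H hbisheaf x _ fun p hp hpx => ?_
      have h1 : p ≤ H.act (H.inner x p) p := by
        conv_lhs => rw [← qs_act_sppX_self H p]
        refine qs_act_mono H (le_trans inf_le_left ?_) le_rfl
        exact qs_inner_mono_left H p hpx
      exact h1.trans (le_biSup (fun s => H.act (H.inner x s) s) hp)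
    · exact iSup₂_le fun p hp => (qs_local_mem_HS H hp.1) x
  · intro x
    refine le_antisymm ?_ ?_
    · refine qs_cover H hbisheaf x _ fun p hp hpx => ?_
      have h1 : p ≤ p ⊓ H.act ⊤ (p ⊓ x) := by
        rw [inf_eq_left.mpr hpx]
        exact le_inf le_rfl (qs_le_act_top H p)
      exact h1.trans (le_biSup (fun s => s ⊓ H.act ⊤ (s ⊓ x)) hp)
    · refine iSup₂_le fun p hp => ?_
      have h2 := hp.2 (p ⊓ x) inf_le_left
      rw [← h2]
      exact inf_le_right
end
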